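/- Let p, q : ℝⁿ → ℝ be twice continuously differentiable and everywhere positive, write s_p = ∇log p and s_q = ∇log q, and let u : ℝⁿ → ℝ be continuously differentiable, such that the product x ↦ u(x)·(s_p(x) − s_q(x)) has compact support. Then ∫ ⟨s_p(x) − s_q(x), ∇u(x)⟩ p(x) dx = − ∫ [ ⟨s_p(x), s_p(x) − s_q(x)⟩ + div(s_p − s_q)(x) ] u(x) p(x) dx, where div denotes the divergence and the integrals are with respect to Lebesgue measure on ℝⁿ. -/

import Mathlib

open MeasureTheory
open scoped RealInnerProductSpace

/-- The divergence `div F = Σ_d ∂F_d/∂x_d` of a vector field on `ℝⁿ`. -/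
noncomputable def diverg {n : ℕ}
    (F : EuclideanSpace ℝ (Fin n) → EuclideanSpace ℝ (Fin n))
    (x : EuclideanSpace ℝ (Fin n)) : ℝ :=
  ∑ d : Fin n, fderiv ℝ F x (EuclideanSpace.single d 1) d

/-- In `ℝⁿ`, the integral of any directional derivative of a compactly supported
`C¹` function vanishes. -/
lemma aux_integral_fderiv_apply_eq_zero {n : ℕ}
    (f : EuclideanSpace ℝ (Fin n) → ℝ) (hf : ContDiff ℝ 1 f)
    (hsupp : HasCompactSupport f) (v : EuclideanSpace ℝ (Fin n)) :
    ∫ x, fderiv ℝ f x v = 0 := by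
  have hd : Differentiable ℝ f := hf.differentiable one_ne_zero
  have hcf : Continuous (fun x => fderiv ℝ f x v) :=
    (hf.continuous_fderiv one_ne_zero).clm_apply continuous_const
  have hsf : HasCompactSupport (fun x => fderiv ℝ f x v) :=
    (hsupp.fderiv ℝ).comp_left (g := fun L : _ →L[ℝ] ℝ => L v) rfl
  have h := integral_mul_fderiv_eq_neg_fderiv_mul_of_integrable
    (μ := (volume : Measure (EuclideanSpace ℝ (Fin n))))
    (f := fun _ => (1:ℝ)) (g := f) (v := v)
    (by simp)
    (by simpa using (hcf.integrable_of_hasCompactSupport hsf))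
    (by simpa using (hf.continuous.integrable_of_hasCompactSupport hsupp))
    (fun x _ => (differentiable_const (1:ℝ)) x) (fun x _ => hd x)
  simpa using h

lemma aux_inner_gradient {n : ℕ} (f : EuclideanSpace ℝ (Fin n) → ℝ)
    (x v : EuclideanSpace ℝ (Fin n)) : ⟪gradient f x, v⟫ = fderiv ℝ f x v := by
  rw [gradient]; exact InnerProductSpace.toDual_symm_apply

lemma aux_decomp {n : ℕ} (y : EuclideanSpace ℝ (Fin n)) :
    ∑ d, y d • EuclideanSpace.single d (1:ℝ) = y := by
  simpa using (EuclideanSpace.basisFun (Fin n) ℝ).sum_repr y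

/-- Divergence theorem: the integral of the divergence of a compactly supported `C¹`
vector field on `ℝⁿ` vanishes. -/
lemma aux_integral_diverg_eq_zero {n : ℕ}
    (V : EuclideanSpace ℝ (Fin n) → EuclideanSpace ℝ (Fin n))
    (hV : ContDiff ℝ 1 V) (hsupp : HasCompactSupport V) :
    ∫ x, ∑ d : Fin n, fderiv ℝ V x (EuclideanSpace.single d 1) d = 0 := by
  have hVd : Differentiable ℝ V := hV.differentiable one_ne_zero
  have hint : ∀ d : Fin n, Integrable
      (fun x => fderiv ℝ V x (EuclideanSpace.single d 1) d) volume := by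
    intro d
    have hc : Continuous (fun x => fderiv ℝ V x (EuclideanSpace.single d 1) d) := by
      exact ((EuclideanSpace.proj d).continuous.comp
        ((hV.continuous_fderiv one_ne_zero).clm_apply continuous_const))
    have hs : HasCompactSupport (fun x => fderiv ℝ V x (EuclideanSpace.single d 1) d) :=
      (hsupp.fderiv ℝ).comp_left
        (g := fun L : EuclideanSpace ℝ (Fin n) →L[ℝ] EuclideanSpace ℝ (Fin n) =>
          L (EuclideanSpace.single d 1) d) rfl
    exact hc.integrable_of_hasCompactSupport hs
  rw [integral_finset_sum _ (fun d _ => hint d)]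
  apply Finset.sum_eq_zero
  intro d _
  have key : ∀ x, fderiv ℝ V x (EuclideanSpace.single d 1) d
      = fderiv ℝ (fun y => EuclideanSpace.proj (𝕜 := ℝ) d (V y)) x
          (EuclideanSpace.single d 1) := by
    intro x
    have h2 := ((EuclideanSpace.proj (𝕜 := ℝ) d).hasFDerivAt.comp x (hVd x).hasFDerivAt).fderiv
    have h3 : (fun y => EuclideanSpace.proj (𝕜 := ℝ) d (V y))
        = (⇑(EuclideanSpace.proj (𝕜 := ℝ) d) ∘ V) := rfl
    rw [h3, h2]; rfl
  simp_rw [key]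
  exact aux_integral_fderiv_apply_eq_zero _
    ((EuclideanSpace.proj (𝕜 := ℝ) d).contDiff.comp hV)
    (hsupp.comp_left (map_zero _)) _

/-- **The integration-by-parts identity behind `Grad^(F,2)` of the Fisher training method.**
For twice continuously differentiable, everywhere positive `p, q : ℝⁿ → ℝ` with scores
`s_p = ∇log p`, `s_q = ∇log q`, and a continuously differentiable `u : ℝⁿ → ℝ` such that
`u·(s_p − s_q)` has compact support,
`∫ ⟨s_p − s_q, ∇u⟩ p dx = − ∫ (⟨s_p, s_p − s_q⟩ + div(s_p − s_q)) u p dx`. -/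
theorem fisher_grad2_integration_by_parts
    (n : ℕ)
    (p q : EuclideanSpace ℝ (Fin n) → ℝ)
    (hp : ContDiff ℝ 2 p) (hq : ContDiff ℝ 2 q)
    (hppos : ∀ x, 0 < p x) (hqpos : ∀ x, 0 < q x)
    (sp sq : EuclideanSpace ℝ (Fin n) → EuclideanSpace ℝ (Fin n))
    (hsp : ∀ x, sp x = gradient (fun y => Real.log (p y)) x)
    (hsq : ∀ x, sq x = gradient (fun y => Real.log (q y)) x)
    (u : EuclideanSpace ℝ (Fin n) → ℝ)
    (hu : ContDiff ℝ 1 u)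
    (hsupp : HasCompactSupport (fun x => u x • (sp x - sq x))) :
    ∫ x, ⟪sp x - sq x, gradient u x⟫ * p x
      = -∫ x, (⟪sp x, sp x - sq x⟫ + diverg (fun y => sp y - sq y) x) * u x * p x := by
  have hpne : ∀ x, p x ≠ 0 := fun x => (hppos x).ne'
  have hqne : ∀ x, q x ≠ 0 := fun x => (hqpos x).ne'
  have hlogp : ContDiff ℝ 2 (fun y => Real.log (p y)) := hp.log hpne
  have hlogq : ContDiff ℝ 2 (fun y => Real.log (q y)) := hq.log hqne
  -- `sp`, `sq` are C¹
  have hsp_eq : sp = fun x => (InnerProductSpace.toDual ℝ _).symm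
      (fderiv ℝ (fun y => Real.log (p y)) x) := funext fun x => by rw [hsp x]; rfl
  have hsq_eq : sq = fun x => (InnerProductSpace.toDual ℝ _).symm
      (fderiv ℝ (fun y => Real.log (q y)) x) := funext fun x => by rw [hsq x]; rfl
  have hspc : ContDiff ℝ 1 sp := by
    rw [hsp_eq]
    exact (InnerProductSpace.toDual ℝ _).symm.contDiff.comp
      (hlogp.fderiv_right (by norm_num))
  have hsqc : ContDiff ℝ 1 sq := by
    rw [hsq_eq]
    exact (InnerProductSpace.toDual ℝ _).symm.contDiff.comp
      (hlogq.fderiv_right (by norm_num))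
  have hwc : ContDiff ℝ 1 (fun y => sp y - sq y) := hspc.sub hsqc
  set L : EuclideanSpace ℝ (Fin n) → ℝ :=
    fun x => ⟪sp x - sq x, gradient u x⟫ * p x with hL_def
  set R : EuclideanSpace ℝ (Fin n) → ℝ :=
    fun x => (⟪sp x, sp x - sq x⟫ + diverg (fun y => sp y - sq y) x) * u x * p x with hR_def
  set V : EuclideanSpace ℝ (Fin n) → EuclideanSpace ℝ (Fin n) :=
    fun x => (u x * p x) • (sp x - sq x) with hV_def
  have hVc : ContDiff ℝ 1 V := (hu.mul (hp.of_le one_le_two)).smul hwc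
  have hVsupp : HasCompactSupport V := by
    have h1 : HasCompactSupport (fun x => p x • (u x • (sp x - sq x))) :=
      HasCompactSupport.smul_left (f := p) (f' := fun x => u x • (sp x - sq x)) hsupp
    have h2 : V = fun x => p x • (u x • (sp x - sq x)) := by
      funext x; rw [hV_def]; simp only [smul_smul]; rw [mul_comm]
    rw [h2]; exact h1
  -- pointwise divergence identity
  have key : ∀ x, ∑ d : Fin n, fderiv ℝ V x (EuclideanSpace.single d 1) d = L x + R x := by
    intro x
    have hud : DifferentiableAt ℝ u x := (hu.differentiable one_ne_zero) x
    have hpd : DifferentiableAt ℝ p x := (hp.differentiable (by norm_num)) x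
    have hwd : DifferentiableAt ℝ (fun y => sp y - sq y) x := (hwc.differentiable one_ne_zero) x
    have hcd : DifferentiableAt ℝ (fun y => u y * p y) x := hud.mul hpd
    have hV' : HasFDerivAt V
        ((u x * p x) • fderiv ℝ (fun y => sp y - sq y) x
          + (fderiv ℝ (fun y => u y * p y) x).smulRight (sp x - sq x)) x :=
      (hcd.hasFDerivAt).smul (hwd.hasFDerivAt)
    rw [hV'.fderiv]
    have coord : ∀ d : Fin n,
        ((u x * p x) • fderiv ℝ (fun y => sp y - sq y) x
          + (fderiv ℝ (fun y => u y * p y) x).smulRight (sp x - sq x))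
          (EuclideanSpace.single d 1) d
        = (u x * p x) * (fderiv ℝ (fun y => sp y - sq y) x (EuclideanSpace.single d 1) d)
          + fderiv ℝ (fun y => u y * p y) x (EuclideanSpace.single d 1) * (sp x - sq x) d := by
      intro d
      simp [ContinuousLinearMap.smulRight_apply, PiLp.add_apply, PiLp.smul_apply, smul_eq_mul]
    rw [Finset.sum_congr rfl (fun d _ => coord d), Finset.sum_add_distrib, ← Finset.mul_sum]
    have hsum2 : ∑ d : Fin n,
        fderiv ℝ (fun y => u y * p y) x (EuclideanSpace.single d 1) * (sp x - sq x) d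
        = fderiv ℝ (fun y => u y * p y) x (sp x - sq x) := by
      conv_rhs => rw [← aux_decomp (sp x - sq x)]
      rw [map_sum]
      exact Finset.sum_congr rfl fun d _ => by
        rw [(fderiv ℝ (fun y => u y * p y) x).map_smul]; simp [mul_comm]
    rw [hsum2]
    have hmul : fderiv ℝ (fun y => u y * p y) x (sp x - sq x)
        = p x * (fderiv ℝ u x (sp x - sq x)) + u x * (fderiv ℝ p x (sp x - sq x)) := by
      rw [fderiv_fun_mul hud hpd]; simp; ring
    have hgu : fderiv ℝ u x (sp x - sq x) = ⟪sp x - sq x, gradient u x⟫ := by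
      rw [real_inner_comm, aux_inner_gradient]
    have hlp : HasFDerivAt (fun y => Real.log (p y)) ((p x)⁻¹ • fderiv ℝ p x) x :=
      (hpd.hasFDerivAt).log (hpne x)
    have hspw : ⟪sp x, sp x - sq x⟫ = (p x)⁻¹ * fderiv ℝ p x (sp x - sq x) := by
      rw [hsp x, aux_inner_gradient, hlp.fderiv]; simp
    have hpw : fderiv ℝ p x (sp x - sq x) = p x * ⟪sp x, sp x - sq x⟫ := by
      rw [hspw, ← mul_assoc, mul_inv_cancel₀ (hpne x), one_mul]
    have hdiv : diverg (fun y => sp y - sq y) x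
        = ∑ d : Fin n, fderiv ℝ (fun y => sp y - sq y) x (EuclideanSpace.single d 1) d := rfl
    rw [hmul, hgu, hpw, hL_def, hR_def]
    simp only [hdiv]
    ring
  -- continuity of the integrands
  have hgradu_cont : Continuous (fun x => gradient u x) := by
    have h : (fun x => gradient u x)
        = fun x => (InnerProductSpace.toDual ℝ _).symm (fderiv ℝ u x) := rfl
    rw [h]
    exact (LinearIsometryEquiv.continuous _).comp (hu.continuous_fderiv one_ne_zero)
  have hwcont : Continuous (fun y => sp y - sq y) := hwc.continuous
  have hLcont : Continuous L := (hwcont.inner hgradu_cont).mul hp.continuous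
  have hdivcont : Continuous (fun x => diverg (fun y => sp y - sq y) x) := by
    have h : (fun x => diverg (fun y => sp y - sq y) x)
        = fun x => ∑ d : Fin n,
          fderiv ℝ (fun y => sp y - sq y) x (EuclideanSpace.single d 1) d := rfl
    rw [h]
    exact continuous_finset_sum _ fun d _ =>
      (EuclideanSpace.proj d).continuous.comp
        ((hwc.continuous_fderiv one_ne_zero).clm_apply continuous_const)
  have hRcont : Continuous R :=
    (((hspc.continuous.inner hwcont).add hdivcont).mul hu.continuous).mul hp.continuous
  -- supports of the integrands
  have hKz : ∀ y, y ∉ tsupport (fun x => u x • (sp x - sq x)) → u y • (sp y - sq y) = 0 :=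
    fun y hy => image_eq_zero_of_notMem_tsupport (f := fun x => u x • (sp x - sq x)) hy
  have hKo : IsOpen (tsupport (fun x => u x • (sp x - sq x)))ᶜ :=
    (isClosed_tsupport _).isOpen_compl
  have hLsup : Function.support L ⊆ tsupport (fun x => u x • (sp x - sq x)) := by
    intro x hx
    by_contra hxK
    apply hx
    by_cases hw0 : sp x - sq x = 0
    · rw [hL_def]; simp [hw0]
    · have hex : ∃ i, (sp x - sq x) i ≠ 0 := by
        by_contra h; push_neg at h
        exact hw0 (by ext i; exact h i)
      obtain ⟨i, hi⟩ := hex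
      have hWo : IsOpen ((tsupport (fun x => u x • (sp x - sq x)))ᶜ
          ∩ {y | (sp y - sq y) i ≠ 0}) :=
        hKo.inter (isOpen_ne.preimage ((EuclideanSpace.proj i).continuous.comp hwcont))
      have hWmem : ((tsupport (fun x => u x • (sp x - sq x)))ᶜ
          ∩ {y | (sp y - sq y) i ≠ 0}) ∈ nhds x :=
        hWo.mem_nhds ⟨hxK, hi⟩
      have hu0 : ∀ y ∈ ((tsupport (fun x => u x • (sp x - sq x)))ᶜ
          ∩ {y | (sp y - sq y) i ≠ 0}), u y = (fun _ => (0:ℝ)) y := by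
        rintro y ⟨hy1, hy2⟩
        rcases smul_eq_zero.1 (hKz y hy1) with h | h
        · exact h
        · exact absurd (by rw [h]; rfl) hy2
      have hev : u =ᶠ[nhds x] (fun _ => (0:ℝ)) := Filter.eventuallyEq_of_mem hWmem hu0
      have hg0 : gradient u x = 0 := by
        rw [hev.gradient_eq]; exact gradient_const _ _
      rw [hL_def]; simp [hg0]
  have hRsup : Function.support R ⊆ tsupport (fun x => u x • (sp x - sq x)) := by
    intro x hx
    by_contra hxK
    apply hx
    by_cases hu0 : u x = 0
    · rw [hR_def]; simp [hu0]
    · have hWo : IsOpen ((tsupport (fun x => u x • (sp x - sq x)))ᶜ ∩ {y | u y ≠ 0}) :=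
        hKo.inter (isOpen_ne.preimage hu.continuous)
      have hWmem : ((tsupport (fun x => u x • (sp x - sq x)))ᶜ ∩ {y | u y ≠ 0}) ∈ nhds x :=
        hWo.mem_nhds ⟨hxK, hu0⟩
      have hw0 : ∀ y ∈ ((tsupport (fun x => u x • (sp x - sq x)))ᶜ ∩ {y | u y ≠ 0}),
          sp y - sq y = (fun _ => (0 : EuclideanSpace ℝ (Fin n))) y := by
        rintro y ⟨hy1, hy2⟩
        rcases smul_eq_zero.1 (hKz y hy1) with h | h
        · exact absurd h hy2
        · exact h
      have hev : (fun y => sp y - sq y) =ᶠ[nhds x]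
          (fun _ => (0 : EuclideanSpace ℝ (Fin n))) := Filter.eventuallyEq_of_mem hWmem hw0
      have hwx0 : sp x - sq x = 0 := hev.eq_of_nhds
      have hdiv0 : diverg (fun y => sp y - sq y) x = 0 := by
        have hfd : fderiv ℝ (fun y => sp y - sq y) x = 0 := by
          rw [hev.fderiv_eq]; exact fderiv_const_apply _
        have h : diverg (fun y => sp y - sq y) x
            = ∑ d : Fin n, fderiv ℝ (fun y => sp y - sq y) x (EuclideanSpace.single d 1) d := rfl
        rw [h, hfd]; simp
      rw [hR_def]; simp [hwx0, hdiv0]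
  have hLint : Integrable L volume :=
    hLcont.integrable_of_hasCompactSupport (hsupp.mono' hLsup)
  have hRint : Integrable R volume :=
    hRcont.integrable_of_hasCompactSupport (hsupp.mono' hRsup)
  -- conclusion
  have hzero : ∫ x, (L x + R x) = 0 := by
    have h : (fun x => L x + R x)
        = fun x => ∑ d : Fin n, fderiv ℝ V x (EuclideanSpace.single d 1) d :=
      funext fun x => (key x).symm
    rw [h]
    exact aux_integral_diverg_eq_zero V hVc hVsupp
  rw [integral_add hLint hRint] at hzero
  have : ∫ x, L x = -∫ x, R x := by linarith
  exact this
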